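/- In the split octonion algebra 𝕆 realized as Zorn vector matrices, the subgroup of algebra automorphisms fixing pointwise the diagonal matrices is isomorphic to SL(3,ℂ), acting by (a v; w b) ↦ (a l(v); (lᵗ)⁻¹(w) b) for l ∈ SL(3,ℂ). -/

import Mathlib

noncomputable section

open Matrix

/-- The split octonions, realized as Zorn vector matrices `(a v; w b)` with
`a, b ∈ ℂ` and `v, w ∈ ℂ³`, encoded as the quadruple `(a, v, w, b)`. -/
abbrev Oct := ℂ × (Fin 3 → ℂ) × (Fin 3 → ℂ) × ℂ

/-- The Zorn vector matrix multiplication on the split octonions. -/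
def octMul (X Y : Oct) : Oct :=
  ⟨X.1 * Y.1 + dotProduct X.2.1 Y.2.2.1,
   Y.2.2.2 • X.2.1 + X.1 • Y.2.1 - crossProduct X.2.2.1 Y.2.2.1,
   Y.1 • X.2.2.1 + X.2.2.2 • Y.2.2.1 + crossProduct X.2.1 Y.2.1,
   X.2.2.2 * Y.2.2.2 + dotProduct X.2.2.1 Y.2.1⟩

/-- The identity element of the split octonions. -/
def octOne : Oct := (1, 0, 0, 1)

/-- The norm form `N(X) = ab - ⟨v,w⟩` of the split octonions. -/
def octNorm (X : Oct) : ℂ := X.1 * X.2.2.2 - dotProduct X.2.1 X.2.2.1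

/-- An automorphism of the split octonion algebra: a linear bijection preserving
the multiplication, the identity and the norm. -/
def IsOctAut (f : Oct → Oct) : Prop :=
  Function.Bijective f ∧ IsLinearMap ℂ f ∧
  (∀ X Y, f (octMul X Y) = octMul (f X) (f Y)) ∧
  f octOne = octOne ∧ (∀ X, octNorm (f X) = octNorm X)

lemma cross_adj (A : Matrix (Fin 3) (Fin 3) ℂ) (v w : Fin 3 → ℂ) :
    crossProduct (A *ᵥ v) (A *ᵥ w) = (adjugate A)ᵀ *ᵥ crossProduct v w := by
  funext i
  fin_cases i <;>
    simp [cross_apply, mulVec, dotProduct, Fin.sum_univ_three,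
      Matrix.adjugate_fin_three, Matrix.transpose_apply] <;> ring

lemma adj_of_det_one (A : Matrix (Fin 3) (Fin 3) ℂ) (hA : A.det = 1) :
    adjugate A = A⁻¹ := by
  rw [Matrix.inv_def, hA]; simp

lemma cross_det_one (A : Matrix (Fin 3) (Fin 3) ℂ) (hA : A.det = 1) (v w : Fin 3 → ℂ) :
    crossProduct (A *ᵥ v) (A *ᵥ w) = Aᵀ⁻¹ *ᵥ crossProduct v w := by
  rw [cross_adj, adj_of_det_one A hA, Matrix.transpose_nonsing_inv]

lemma dot_inv (A : Matrix (Fin 3) (Fin 3) ℂ) (hA : A.det = 1) (v w : Fin 3 → ℂ) :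
    dotProduct (A *ᵥ v) (Aᵀ⁻¹ *ᵥ w) = dotProduct v w := by
  have h : IsUnit (Aᵀ).det := by rw [Matrix.det_transpose, hA]; exact isUnit_one
  rw [← Matrix.vecMul_transpose, Matrix.dotProduct_mulVec, Matrix.vecMul_vecMul,
    Matrix.mul_nonsing_inv _ h, Matrix.vecMul_one]

lemma act_isAut (L : Matrix (Fin 3) (Fin 3) ℂ) (hL : L.det = 1) :
    IsOctAut (fun X : Oct => (X.1, L *ᵥ X.2.1, Lᵀ⁻¹ *ᵥ X.2.2.1, X.2.2.2)) := by
  have hLu : IsUnit L.det := hL ▸ isUnit_one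
  have hLTu : IsUnit (Lᵀ).det := by rw [Matrix.det_transpose, hL]; exact isUnit_one
  have hLTinv_det : (Lᵀ⁻¹).det = 1 := by
    rw [Matrix.det_nonsing_inv, Matrix.det_transpose, hL]; simp
  have e1 : ((Lᵀ⁻¹)ᵀ)⁻¹ = L := by
    rw [show Lᵀ⁻¹ = L⁻¹ᵀ from (Matrix.transpose_nonsing_inv L).symm,
      Matrix.transpose_transpose, Matrix.nonsing_inv_nonsing_inv _ hLu]
  have hcross2 : ∀ x y : Fin 3 → ℂ,
      crossProduct (Lᵀ⁻¹ *ᵥ x) (Lᵀ⁻¹ *ᵥ y) = L *ᵥ crossProduct x y := by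
    intro x y
    have := cross_det_one (Lᵀ⁻¹) hLTinv_det x y
    rwa [e1] at this
  refine ⟨?_, ?_, ?_, ?_, ?_⟩
  · apply Function.bijective_iff_has_inverse.mpr
    refine ⟨fun X : Oct => (X.1, L⁻¹ *ᵥ X.2.1, Lᵀ *ᵥ X.2.2.1, X.2.2.2), ?_, ?_⟩
    · intro X
      simp only [Matrix.mulVec_mulVec]
      rw [Matrix.nonsing_inv_mul _ hLu, Matrix.mul_nonsing_inv _ hLTu]
      simp [Prod.ext_iff]
    · intro X
      simp only [Matrix.mulVec_mulVec]
      rw [Matrix.mul_nonsing_inv _ hLu, Matrix.nonsing_inv_mul _ hLTu]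
      simp [Prod.ext_iff]
  · constructor
    · intro x y
      simp [Prod.ext_iff, Matrix.mulVec_add]
    · intro c x
      simp [Prod.ext_iff, Matrix.mulVec_smul]
  · intro X Y
    simp only [octMul, Prod.ext_iff]
    refine ⟨?_, ?_, ?_, ?_⟩
    · rw [dot_inv L hL]
    · rw [Matrix.mulVec_sub, Matrix.mulVec_add, Matrix.mulVec_smul, Matrix.mulVec_smul,
        hcross2]
    · rw [Matrix.mulVec_add, Matrix.mulVec_add, Matrix.mulVec_smul, Matrix.mulVec_smul,
        cross_det_one L hL]
    · rw [dotProduct_comm (Lᵀ⁻¹ *ᵥ X.2.2.1), dot_inv L hL, dotProduct_comm]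
  · simp [octOne, Prod.ext_iff]
  · intro X
    simp only [octNorm]
    rw [dot_inv L hL]

lemma octMul_e1_left (X : Oct) :
    octMul (1, 0, 0, 0) X = (X.1, X.2.1, 0, 0) := by
  simp [octMul, Prod.ext_iff]

lemma octMul_e1_right (X : Oct) :
    octMul X (1, 0, 0, 0) = (X.1, 0, X.2.2.1, 0) := by
  simp [octMul, Prod.ext_iff]

lemma octMul_vv (v v' : Fin 3 → ℂ) :
    octMul (0, v, 0, 0) (0, v', 0, 0) = (0, 0, crossProduct v v', 0) := by
  simp [octMul, Prod.ext_iff]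

lemma octMul_vw (v w : Fin 3 → ℂ) :
    octMul (0, v, 0, 0) (0, 0, w, 0) = (dotProduct v w, 0, 0, 0) := by
  simp [octMul, Prod.ext_iff]

lemma cross_single01 :
    crossProduct (Pi.single (0:Fin 3) (1:ℂ)) (Pi.single 1 1) = Pi.single 2 1 := by
  funext i; fin_cases i <;> simp [cross_apply, Pi.single_apply]

lemma cross_single12 :
    crossProduct (Pi.single (1:Fin 3) (1:ℂ)) (Pi.single 2 1) = Pi.single 0 1 := by
  funext i; fin_cases i <;> simp [cross_apply, Pi.single_apply]

lemma cross_single20 :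
    crossProduct (Pi.single (2:Fin 3) (1:ℂ)) (Pi.single 0 1) = Pi.single 1 1 := by
  funext i; fin_cases i <;> simp [cross_apply, Pi.single_apply]

/-- In the split octonion algebra realized as Zorn vector matrices, the group of
algebra automorphisms fixing pointwise the diagonal matrices is isomorphic to
`SL(3,ℂ)`, acting by `(a v; w b) ↦ (a l(v); (lᵗ)⁻¹(w) b)` for `l ∈ SL(3,ℂ)`. -/
theorem oct_aut_fixing_diagonal_iff_SL3 :
    (∀ f : Oct → Oct, IsOctAut f → (∀ a b : ℂ, f (a, 0, 0, b) = (a, 0, 0, b)) →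
      ∃! l : Matrix.SpecialLinearGroup (Fin 3) ℂ, ∀ X : Oct,
        f X = (X.1, Matrix.mulVec (l : Matrix (Fin 3) (Fin 3) ℂ) X.2.1,
          Matrix.mulVec (Matrix.transpose (l : Matrix (Fin 3) (Fin 3) ℂ))⁻¹ X.2.2.1,
          X.2.2.2)) ∧
    (∀ l : Matrix.SpecialLinearGroup (Fin 3) ℂ,
      IsOctAut (fun X : Oct =>
        (X.1, Matrix.mulVec (l : Matrix (Fin 3) (Fin 3) ℂ) X.2.1,
          Matrix.mulVec (Matrix.transpose (l : Matrix (Fin 3) (Fin 3) ℂ))⁻¹ X.2.2.1,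
          X.2.2.2)) ∧
      ∀ a b : ℂ,
        (fun X : Oct =>
          ((X.1, Matrix.mulVec (l : Matrix (Fin 3) (Fin 3) ℂ) X.2.1,
            Matrix.mulVec (Matrix.transpose (l : Matrix (Fin 3) (Fin 3) ℂ))⁻¹ X.2.2.1,
            X.2.2.2) : Oct)) (a, 0, 0, b) = (a, 0, 0, b)) := by
  constructor
  · -- hard direction
    intro f haut hfix
    obtain ⟨hbij, hlin, hmul, hone, hnorm⟩ := haut
    have hf0 : f 0 = 0 := hlin.map_zero
    have he1 : f ((1:ℂ), (0:Fin 3 → ℂ), (0:Fin 3 → ℂ), (0:ℂ)) = (1, 0, 0, 0) := hfix 1 0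
    -- f preserves the v-part subspace
    have hv : ∀ v : Fin 3 → ℂ, f (0, v, 0, 0) = (0, (f (0, v, 0, 0)).2.1, 0, 0) := by
      intro v
      have h1 := hmul ((1:ℂ), (0:Fin 3 → ℂ), (0:Fin 3 → ℂ), (0:ℂ)) (0, v, 0, 0)
      simp only [octMul_e1_left, he1] at h1
      have h2 := hmul ((0:ℂ), v, (0:Fin 3 → ℂ), (0:ℂ)) (1, 0, 0, 0)
      simp only [octMul_e1_right, he1] at h2
      rw [show ((0:ℂ), (0:Fin 3 → ℂ), (0:Fin 3 → ℂ), (0:ℂ)) = (0 : Oct) from rfl, hf0] at h2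
      have ha : (f (0, v, 0, 0)).1 = 0 := by
        have := congrArg Prod.fst h2
        simpa using this.symm
      rw [ha] at h1
      exact h1
    have hw : ∀ w : Fin 3 → ℂ, f (0, 0, w, 0) = (0, 0, (f (0, 0, w, 0)).2.2.1, 0) := by
      intro w
      have h1 := hmul ((0:ℂ), (0:Fin 3 → ℂ), w, (0:ℂ)) (1, 0, 0, 0)
      simp only [octMul_e1_right, he1] at h1
      have h2 := hmul ((1:ℂ), (0:Fin 3 → ℂ), (0:Fin 3 → ℂ), (0:ℂ)) (0, 0, w, 0)
      simp only [octMul_e1_left, he1] at h2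
      rw [show ((0:ℂ), (0:Fin 3 → ℂ), (0:Fin 3 → ℂ), (0:ℂ)) = (0 : Oct) from rfl, hf0] at h2
      have ha : (f (0, 0, w, 0)).1 = 0 := by
        have := congrArg Prod.fst h2
        simpa using this.symm
      rw [ha] at h1
      exact h1
    -- extract the matrices
    obtain ⟨L, hLv⟩ : ∃ L : Matrix (Fin 3) (Fin 3) ℂ,
        ∀ v, L *ᵥ v = (f (0, v, 0, 0)).2.1 := by
      refine ⟨LinearMap.toMatrix'
        { toFun := fun v => (f (0, v, 0, 0)).2.1
          map_add' := ?_, map_smul' := ?_ }, fun v => ?_⟩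
      · intro x y
        show (f ((0:ℂ), x + y, (0:Fin 3 → ℂ), (0:ℂ))).2.1
            = (f (0, x, 0, 0)).2.1 + (f (0, y, 0, 0)).2.1
        have hx : ((0:ℂ), x + y, (0:Fin 3 → ℂ), (0:ℂ))
            = ((0:ℂ), x, (0:Fin 3 → ℂ), (0:ℂ)) + (0, y, 0, 0) := by
          simp [Prod.ext_iff]
        rw [hx, hlin.map_add]
        rfl
      · intro c x
        show (f ((0:ℂ), c • x, (0:Fin 3 → ℂ), (0:ℂ))).2.1 = c • (f (0, x, 0, 0)).2.1
        have hx : ((0:ℂ), c • x, (0:Fin 3 → ℂ), (0:ℂ))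
            = c • ((0:ℂ), x, (0:Fin 3 → ℂ), (0:ℂ)) := by
          simp [Prod.ext_iff]
        rw [hx, hlin.map_smul]
        rfl
      · rw [← Matrix.toLin'_apply, Matrix.toLin'_toMatrix']
        rfl
    obtain ⟨M, hMw⟩ : ∃ M : Matrix (Fin 3) (Fin 3) ℂ,
        ∀ w, M *ᵥ w = (f (0, 0, w, 0)).2.2.1 := by
      refine ⟨LinearMap.toMatrix'
        { toFun := fun w => (f (0, 0, w, 0)).2.2.1
          map_add' := ?_, map_smul' := ?_ }, fun w => ?_⟩
      · intro x y
        show (f ((0:ℂ), (0:Fin 3 → ℂ), x + y, (0:ℂ))).2.2.1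
            = (f (0, 0, x, 0)).2.2.1 + (f (0, 0, y, 0)).2.2.1
        have hx : ((0:ℂ), (0:Fin 3 → ℂ), x + y, (0:ℂ))
            = ((0:ℂ), (0:Fin 3 → ℂ), x, (0:ℂ)) + (0, 0, y, 0) := by
          simp [Prod.ext_iff]
        rw [hx, hlin.map_add]
        rfl
      · intro c x
        show (f ((0:ℂ), (0:Fin 3 → ℂ), c • x, (0:ℂ))).2.2.1 = c • (f (0, 0, x, 0)).2.2.1
        have hx : ((0:ℂ), (0:Fin 3 → ℂ), c • x, (0:ℂ))
            = c • ((0:ℂ), (0:Fin 3 → ℂ), x, (0:ℂ)) := by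
          simp [Prod.ext_iff]
        rw [hx, hlin.map_smul]
        rfl
      · rw [← Matrix.toLin'_apply, Matrix.toLin'_toMatrix']
        rfl
    -- the dot product relation
    have hdot : ∀ v w : Fin 3 → ℂ,
        dotProduct (L *ᵥ v) (M *ᵥ w) = dotProduct v w := by
      intro v w
      have h := hmul ((0:ℂ), v, (0:Fin 3 → ℂ), (0:ℂ)) (0, 0, w, 0)
      rw [octMul_vw, hfix, hv v, hw w, octMul_vw] at h
      have := congrArg Prod.fst h
      simp only at this
      rw [hLv, hMw]
      exact this.symm
    -- the cross product relation
    have hcross : ∀ v v' : Fin 3 → ℂ,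
        M *ᵥ crossProduct v v' = crossProduct (L *ᵥ v) (L *ᵥ v') := by
      intro v v'
      have h := hmul ((0:ℂ), v, (0:Fin 3 → ℂ), (0:ℂ)) (0, v', 0, 0)
      rw [octMul_vv, hv v, hv v', octMul_vv, hw (crossProduct v v')] at h
      have := congrArg (fun X : Oct => X.2.2.1) h
      simp only at this
      rw [hMw, hLv, hLv]
      exact this
    -- M equals the transposed adjugate of L
    have hM_eq : M = (Matrix.adjugate L)ᵀ := by
      have k0 : M *ᵥ Pi.single (0 : Fin 3) (1:ℂ) = (Matrix.adjugate L)ᵀ *ᵥ Pi.single 0 1 := by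
        rw [← cross_single12, hcross, cross_adj]
      have k1 : M *ᵥ Pi.single (1 : Fin 3) (1:ℂ) = (Matrix.adjugate L)ᵀ *ᵥ Pi.single 1 1 := by
        rw [← cross_single20, hcross, cross_adj]
      have k2 : M *ᵥ Pi.single (2 : Fin 3) (1:ℂ) = (Matrix.adjugate L)ᵀ *ᵥ Pi.single 2 1 := by
        rw [← cross_single01, hcross, cross_adj]
      have key : ∀ j : Fin 3, M *ᵥ Pi.single j 1 = (Matrix.adjugate L)ᵀ *ᵥ Pi.single j 1 := by
        intro j
        fin_cases j
        · exact k0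
        · exact k1
        · exact k2
      ext i j
      have := congrFun (key j) i
      simpa using this
    -- det L = 1
    have hLM : Lᵀ * M = 1 := by
      ext i j
      have h := hdot (Pi.single i 1) (Pi.single j 1)
      simp only [Matrix.mulVec_single_one, Matrix.col_apply, mul_one, dotProduct, Pi.single_apply] at h
      rw [Matrix.mul_apply, Matrix.one_apply]
      simp only [Matrix.transpose_apply]
      rw [h]
      fin_cases i <;> fin_cases j <;> simp [Fin.sum_univ_three]
    have hdet : L.det = 1 := by
      have h1 : (Matrix.adjugate L * L)ᵀ = 1 := by
        rw [Matrix.transpose_mul, ← hM_eq, hLM]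
      rw [Matrix.adjugate_mul] at h1
      have := congrFun (congrFun h1 0) 0
      simpa using this
    have hM_inv : M = Lᵀ⁻¹ := by
      rw [hM_eq, adj_of_det_one L hdet, Matrix.transpose_nonsing_inv]
    -- the formula for f
    have hform : ∀ X : Oct, f X = (X.1, L *ᵥ X.2.1, Lᵀ⁻¹ *ᵥ X.2.2.1, X.2.2.2) := by
      intro X
      have hdecomp : (X : Oct)
          = ((X.1, 0, 0, X.2.2.2) : Oct) + (0, X.2.1, 0, 0) + (0, 0, X.2.2.1, 0) := by
        simp [Prod.ext_iff]
      conv_lhs => rw [hdecomp]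
      rw [hlin.map_add, hlin.map_add, hfix, hv, hw, ← hLv, ← hMw, hM_inv]
      simp [Prod.ext_iff]
    refine ⟨⟨L, hdet⟩, fun X => hform X, ?_⟩
    intro l' hl'
    apply Subtype.ext
    ext i j
    have h1 := congrArg (fun X : Oct => X.2.1) ((hl' (0, Pi.single j 1, 0, 0)).symm.trans
      (hform (0, Pi.single j 1, 0, 0)))
    simp only [Matrix.mulVec_single_one, mul_one] at h1
    exact congrFun h1 i
  · -- easy direction
    intro l
    refine ⟨act_isAut (l : Matrix (Fin 3) (Fin 3) ℂ) l.2, fun a b => ?_⟩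
    simp [Prod.ext_iff]
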